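/- Let A, V ∈ ℝ^{d×d} and u ∈ ℝ^d. The rank-one matrix Σ = uuᵀ satisfies VΣAΣ + ΣAᵀΣVᵀ = 0 if and only if Vu = 0 or uᵀ(A + Aᵀ)u = 0. -/
import Mathlib


open Matrix

lemma mul_vecMulVec' {d : ℕ} (M : Matrix (Fin d) (Fin d) ℝ) (a b : Fin d → ℝ) :
    M * vecMulVec a b = vecMulVec (M.mulVec a) b := by
  ext i j
  simp [mul_apply, vecMulVec_apply, mulVec, dotProduct, Finset.sum_mul, mul_assoc]

lemma vecMulVec_mul' {d : ℕ} (M : Matrix (Fin d) (Fin d) ℝ) (a b : Fin d → ℝ) :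
    vecMulVec a b * M = vecMulVec a (M.vecMul b) := by
  ext i j
  simp [mul_apply, vecMulVec_apply, vecMul, dotProduct, Finset.mul_sum, mul_assoc]

lemma vecMulVec_mul_vecMulVec' {d : ℕ} (a b c e : Fin d → ℝ) :
    vecMulVec a b * vecMulVec c e = (b ⬝ᵥ c) • vecMulVec a e := by
  ext i j
  simp [mul_apply, vecMulVec_apply, dotProduct, Finset.sum_mul, Finset.mul_sum]
  exact Finset.sum_congr rfl (fun k _ => by ring)

lemma zero_vecMulVec' {d : ℕ} (b : Fin d → ℝ) : vecMulVec (0 : Fin d → ℝ) b = 0 := by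
  ext i j; simp [vecMulVec_apply]

lemma vecMulVec_zero' {d : ℕ} (a : Fin d → ℝ) : vecMulVec a (0 : Fin d → ℝ) = 0 := by
  ext i j; simp [vecMulVec_apply]

/-- The rank-one matrix `Σ = uuᵀ` is a stationary point of `Σ̇ = VΣAΣ + ΣAᵀΣVᵀ` if and only
if `Vu = 0` or `uᵀ(A + Aᵀ)u = 0`. -/
theorem stmt_8 (d : ℕ) (A V : Matrix (Fin d) (Fin d) ℝ) (u : Fin d → ℝ) :
    V * vecMulVec u u * A * vecMulVec u u +
      vecMulVec u u * Aᵀ * vecMulVec u u * Vᵀ = 0 ↔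
    V.mulVec u = 0 ∨ u ⬝ᵥ (A + Aᵀ).mulVec u = 0 := by
  set w := V.mulVec u with hw
  set c := u ⬝ᵥ A.mulVec u with hc
  have h1 : A.vecMul u ⬝ᵥ u = c := (dotProduct_mulVec u A u).symm
  have h2 : Aᵀ.vecMul u ⬝ᵥ u = c := by
    rw [vecMul_transpose, dotProduct_comm]
  have h3 : Vᵀ.vecMul u = w := by rw [vecMul_transpose]
  have key : V * vecMulVec u u * A * vecMulVec u u +
      vecMulVec u u * Aᵀ * vecMulVec u u * Vᵀ
      = c • (vecMulVec w u + vecMulVec u w) := by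
    rw [mul_vecMulVec' V u u, vecMulVec_mul' A w u,
      vecMulVec_mul_vecMulVec' w (A.vecMul u) u u,
      vecMulVec_mul' Aᵀ u u,
      vecMulVec_mul_vecMulVec' u (Aᵀ.vecMul u) u u,
      smul_mul_assoc, vecMulVec_mul' Vᵀ u u, h1, h2, h3, smul_add]
  have hc2 : u ⬝ᵥ (A + Aᵀ).mulVec u = 2 * c := by
    rw [add_mulVec, dotProduct_add]
    have : u ⬝ᵥ Aᵀ.mulVec u = c := by
      rw [mulVec_transpose, dotProduct_comm, ← dotProduct_mulVec]
    rw [this, ← hc]; ring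
  rw [key, hc2]
  constructor
  · intro h
    by_cases hcz : c = 0
    · right; rw [hcz]; ring
    · left
      have hM : vecMulVec w u + vecMulVec u w = 0 := by
        have := congrArg (fun M => c⁻¹ • M) h
        simpa [smul_smul, inv_mul_cancel₀ hcz] using this
      have hij : ∀ i j, w i * u j + u i * w j = 0 := by
        intro i j
        have := congrFun (congrFun hM i) j
        simpa [vecMulVec_apply] using this
      have hdiag : ∀ i, w i * u i = 0 := by
        intro i
        have := hij i i
        nlinarith [this]
      have hall : ∀ i j, w i * u j = 0 := by
        intro i j
        have ha := hij i j
        have hb := hdiag i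
        have hd := hdiag j
        nlinarith [ha, hb, hd]
      by_contra hwne
      obtain ⟨i, hi⟩ := Function.ne_iff.mp hwne
      have hu0 : u = 0 := by
        funext j
        have := hall i j
        simpa using (mul_eq_zero.mp this).resolve_left (by simpa using hi)
      apply hcz
      simp [hc, hu0]
  · rintro (h | h)
    · simp [h, zero_vecMulVec', vecMulVec_zero']
    · have : c = 0 := by linarith
      simp [this]
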